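/- The following identity of rational functions in t, w, q holds: 1 + q^2*(t + w*q + t^2*q^2)/(1-w*q^3) + q^6*(q + q^2 + t^3)/((1-t*q^2)(1-w*q^3)) = ((1-q^2)(1-q^3)/((1-t*q^2)(1-w*q^3))) * (1 + q^2/(1-q) + q^6/((1-q)(1-q^2))). -/

import Mathlib

noncomputable section

open MvPolynomial

/-- The field of rational functions in `t`, `w` and `q` over `ℚ`. -/
abbrev F : Type := FractionRing (MvPolynomial (Fin 3) ℚ)

def t : F := algebraMap (MvPolynomial (Fin 3) ℚ) F (X 0)
def w : F := algebraMap (MvPolynomial (Fin 3) ℚ) F (X 1)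
def q : F := algebraMap (MvPolynomial (Fin 3) ℚ) F (X 2)

lemma aux_ne (p : MvPolynomial (Fin 3) ℚ) (h : eval (fun _ => (0:ℚ)) p ≠ 0) :
    algebraMap (MvPolynomial (Fin 3) ℚ) F p ≠ 0 := by
  intro hp
  apply h
  have : p = 0 := IsFractionRing.injective (MvPolynomial (Fin 3) ℚ) F (by simpa using hp)
  simp [this]

theorem stmt17 :
    1 + q ^ 2 * (t + w * q + t ^ 2 * q ^ 2) / (1 - w * q ^ 3)
        + q ^ 6 * (q + q ^ 2 + t ^ 3) / ((1 - t * q ^ 2) * (1 - w * q ^ 3))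
      = ((1 - q ^ 2) * (1 - q ^ 3) / ((1 - t * q ^ 2) * (1 - w * q ^ 3))) *
          (1 + q ^ 2 / (1 - q) + q ^ 6 / ((1 - q) * (1 - q ^ 2))) := by
  have h1 : (1 : F) - w * q ^ 3 ≠ 0 := by
    have := aux_ne (1 - X 1 * X 2 ^ 3) (by simp)
    simpa [w, q, map_sub, map_mul, map_pow, map_one] using this
  have h2 : (1 : F) - t * q ^ 2 ≠ 0 := by
    have := aux_ne (1 - X 0 * X 2 ^ 2) (by simp)
    simpa [t, q, map_sub, map_mul, map_pow, map_one] using this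
  have h3 : (1 : F) - q ≠ 0 := by
    have := aux_ne (1 - X 2) (by simp)
    simpa [q, map_sub, map_one] using this
  have h4 : (1 : F) - q ^ 2 ≠ 0 := by
    have := aux_ne (1 - X 2 ^ 2) (by simp)
    simpa [q, map_sub, map_pow, map_one] using this
  have h5 : (1 : F) - q ^ 3 ≠ 0 := by
    have := aux_ne (1 - X 2 ^ 3) (by simp)
    simpa [q, map_sub, map_pow, map_one] using this
  have h1' : (1 : F) - q ^ 3 * w ≠ 0 := by rwa [mul_comm]
  have h2' : (1 : F) - q ^ 2 * t ≠ 0 := by rwa [mul_comm]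
  field_simp
  ring
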